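/- Let X, A be random variables with finite ranges and L a {0,1}-valued random variable, such that conditioned on L=0 the variable A is independent of X (Pr(A=a | X=x, L=0) = Pr(A=a | L=0) whenever Pr(X=x, L=0) > 0), and Pr(L=0 | X=x, A=a) > 0 whenever Pr(X=x, A=a) > 0. Then susp(X,A) − susp(X) + H(A|X) = −Σ_a Pr(A=a)·log Pr(A=a | L=0); that is, the expected increase in suspicion given X plus the conditional entropy of A given X equals the cross-entropy of the distribution of A relative to the conditional distribution of A given L=0. -/
import Mathlib


open Finset

/-- Probability of an event `E` under the probability mass function `p`
on a finite sample space `Ω`. -/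
noncomputable def Pr {Ω : Type*} [Fintype Ω] (p : Ω → ℝ) (E : Set Ω) : ℝ :=
  ∑ ω, E.indicator p ω

/-- Conditional probability `Pr(E | F)`. -/
noncomputable def cPr {Ω : Type*} [Fintype Ω] (p : Ω → ℝ) (E F : Set Ω) : ℝ :=
  Pr p (E ∩ F) / Pr p F

/-- The suspicion given a random variable `Yv`:
`susp(Y) = Σ_y Pr(Y=y) · (−log₂ Pr(L=0 | Y=y))`. -/
noncomputable def susp {Ω Y : Type*} [Fintype Ω] [Fintype Y] (p : Ω → ℝ)
    (L : Ω → Bool) (Yv : Ω → Y) : ℝ :=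
  ∑ y, Pr p {ω | Yv ω = y} * (-Real.logb 2 (cPr p {ω | L ω = false} {ω | Yv ω = y}))

/-- Mutual information (base 2) between two finite-valued random variables. -/
noncomputable def mutInfo {Ω S T : Type*} [Fintype Ω] [Fintype S] [Fintype T]
    (p : Ω → ℝ) (Xv : Ω → S) (Av : Ω → T) : ℝ :=
  ∑ x, ∑ a, Pr p {ω | Xv ω = x ∧ Av ω = a} *
    Real.logb 2 (Pr p {ω | Xv ω = x ∧ Av ω = a} /
      (Pr p {ω | Xv ω = x} * Pr p {ω | Av ω = a}))

/-- Conditional Shannon entropy (base 2) `H(A | X)`. -/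
noncomputable def condEntropy {Ω S T : Type*} [Fintype Ω] [Fintype S] [Fintype T]
    (p : Ω → ℝ) (Av : Ω → T) (Xv : Ω → S) : ℝ :=
  ∑ x, ∑ a, Pr p {ω | Xv ω = x ∧ Av ω = a} *
    Real.logb 2 (Pr p {ω | Xv ω = x} / Pr p {ω | Xv ω = x ∧ Av ω = a})

/-- Conditional mutual information (base 2) `I(X; A | Z)`. -/
noncomputable def condMutInfo {Ω S T U : Type*} [Fintype Ω] [Fintype S] [Fintype T] [Fintype U]
    (p : Ω → ℝ) (Xv : Ω → S) (Av : Ω → T) (Zv : Ω → U) : ℝ :=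
  ∑ z, ∑ x, ∑ a, Pr p {ω | Xv ω = x ∧ Av ω = a ∧ Zv ω = z} *
    Real.logb 2 ((Pr p {ω | Xv ω = x ∧ Av ω = a ∧ Zv ω = z} * Pr p {ω | Zv ω = z}) /
      (Pr p {ω | Xv ω = x ∧ Zv ω = z} * Pr p {ω | Av ω = a ∧ Zv ω = z}))

section Aux
variable {Ω : Type*} [Fintype Ω] {p : Ω → ℝ}

lemma Pr_nonneg (hp : ∀ ω, 0 ≤ p ω) (E : Set Ω) : 0 ≤ Pr p E :=
  Finset.sum_nonneg fun ω _ => Set.indicator_nonneg (fun ω _ => hp ω) ω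

lemma Pr_mono (hp : ∀ ω, 0 ≤ p ω) {E F : Set Ω} (h : E ⊆ F) : Pr p E ≤ Pr p F := by
  classical
  refine Finset.sum_le_sum fun ω _ => ?_
  simp only [Set.indicator_apply]
  by_cases hE : ω ∈ E
  · simp [hE, h hE]
  · by_cases hF : ω ∈ F <;> simp [hE, hF, hp ω]

lemma Pr_fiber_X {S T : Type*} [Fintype S] [Fintype T] (X : Ω → S) (A : Ω → T) (x : S) :
    ∑ a, Pr p {ω | X ω = x ∧ A ω = a} = Pr p {ω | X ω = x} := by
  classical
  simp only [Pr, Set.indicator_apply]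
  rw [Finset.sum_comm]
  refine Finset.sum_congr rfl fun ω _ => ?_
  by_cases h : X ω = x <;> simp [h]

lemma Pr_fiber_A {S T : Type*} [Fintype S] [Fintype T] (X : Ω → S) (A : Ω → T) (a : T) :
    ∑ x, Pr p {ω | X ω = x ∧ A ω = a} = Pr p {ω | A ω = a} := by
  classical
  simp only [Pr, Set.indicator_apply]
  rw [Finset.sum_comm]
  refine Finset.sum_congr rfl fun ω _ => ?_
  by_cases h : A ω = a <;> simp [h]

end Aux

/-- `susp(X,A) − susp(X) + H(A|X) = −Σ_a Pr(A=a)·log₂ Pr(A=a | L=0)`. -/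
theorem susp_increase_add_condEntropy_eq_crossEntropy
    {Ω S T : Type*} [Fintype Ω] [Fintype S] [Fintype T]
    (p : Ω → ℝ) (hp : ∀ ω, 0 ≤ p ω) (hp1 : ∑ ω, p ω = 1)
    (X : Ω → S) (A : Ω → T) (L : Ω → Bool)
    (hindep : ∀ (a : T) (x : S), 0 < Pr p {ω | X ω = x ∧ L ω = false} →
      cPr p {ω | A ω = a} {ω | X ω = x ∧ L ω = false} =
        cPr p {ω | A ω = a} {ω | L ω = false})
    (hpos : ∀ (x : S) (a : T), 0 < Pr p {ω | X ω = x ∧ A ω = a} →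
      0 < cPr p {ω | L ω = false} {ω | X ω = x ∧ A ω = a}) :
    susp p L (fun ω => (X ω, A ω)) - susp p L X + condEntropy p A X =
      -(∑ a : T, Pr p {ω | A ω = a} *
        Real.logb 2 (cPr p {ω | A ω = a} {ω | L ω = false})) := by
  classical
  have hpair : susp p L (fun ω => (X ω, A ω)) =
      ∑ x, ∑ a, Pr p {ω | X ω = x ∧ A ω = a} *
        (-Real.logb 2 (cPr p {ω | L ω = false} {ω | X ω = x ∧ A ω = a})) := by
    unfold susp
    rw [Fintype.sum_prod_type]
    refine Finset.sum_congr rfl fun x _ => Finset.sum_congr rfl fun a _ => ?_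
    have hset : {ω | (X ω, A ω) = (x, a)} = {ω | X ω = x ∧ A ω = a} := by
      ext ω; simp [Prod.ext_iff]
    rw [hset]
  have hX : susp p L X = ∑ x, ∑ a, Pr p {ω | X ω = x ∧ A ω = a} *
      (-Real.logb 2 (cPr p {ω | L ω = false} {ω | X ω = x})) := by
    unfold susp
    refine Finset.sum_congr rfl fun x _ => ?_
    rw [← Pr_fiber_X X A x, Finset.sum_mul]
  have hA : (∑ a : T, Pr p {ω | A ω = a} *
        Real.logb 2 (cPr p {ω | A ω = a} {ω | L ω = false})) =
      ∑ x, ∑ a, Pr p {ω | X ω = x ∧ A ω = a} *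
        Real.logb 2 (cPr p {ω | A ω = a} {ω | L ω = false}) := by
    rw [Finset.sum_comm]
    refine Finset.sum_congr rfl fun a _ => ?_
    rw [← Pr_fiber_A X A a, Finset.sum_mul]
  rw [hpair, hX, hA]
  unfold condEntropy
  rw [← Finset.sum_sub_distrib, ← Finset.sum_add_distrib, ← Finset.sum_neg_distrib]
  refine Finset.sum_congr rfl fun x _ => ?_
  rw [← Finset.sum_sub_distrib, ← Finset.sum_add_distrib, ← Finset.sum_neg_distrib]
  refine Finset.sum_congr rfl fun a _ => ?_
  by_cases h0 : Pr p {ω | X ω = x ∧ A ω = a} = 0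
  · simp [h0]
  -- positive case
  have hxa : 0 < Pr p {ω | X ω = x ∧ A ω = a} :=
    lt_of_le_of_ne (Pr_nonneg hp _) (Ne.symm h0)
  have hfxa : 0 < Pr p ({ω | L ω = false} ∩ {ω | X ω = x ∧ A ω = a}) := by
    have h1 := hpos x a hxa
    unfold cPr at h1
    have := mul_pos h1 hxa
    rwa [div_mul_cancel₀ _ (ne_of_gt hxa)] at this
  have hx : 0 < Pr p {ω | X ω = x} :=
    lt_of_lt_of_le hxa (Pr_mono hp (fun ω hω => hω.1))
  have hfx : 0 < Pr p ({ω | L ω = false} ∩ {ω | X ω = x}) :=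
    lt_of_lt_of_le hfxa (Pr_mono hp (fun ω hω => ⟨hω.1, hω.2.1⟩))
  have hf : 0 < Pr p {ω | L ω = false} :=
    lt_of_lt_of_le hfx (Pr_mono hp (fun ω hω => hω.1))
  have hsetxf : {ω | X ω = x ∧ L ω = false} = {ω | L ω = false} ∩ {ω | X ω = x} := by
    ext ω; simp only [Set.mem_setOf_eq, Set.mem_inter_iff]; tauto
  have hsetaxf : {ω | A ω = a} ∩ {ω | X ω = x ∧ L ω = false} =
      {ω | L ω = false} ∩ {ω | X ω = x ∧ A ω = a} := by
    ext ω; simp only [Set.mem_setOf_eq, Set.mem_inter_iff]; tauto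
  have hind := hindep a x (by rw [hsetxf]; exact hfx)
  unfold cPr at hind
  rw [hsetaxf, hsetxf] at hind
  -- hind : Pfxa / Pfx = Paf / Pf
  have haf : 0 < Pr p ({ω | A ω = a} ∩ {ω | L ω = false}) := by
    have : 0 < Pr p ({ω | A ω = a} ∩ {ω | L ω = false}) / Pr p {ω | L ω = false} := by
      rw [← hind]; exact div_pos hfxa hfx
    have := mul_pos this hf
    rwa [div_mul_cancel₀ _ (ne_of_gt hf)] at this
  have hrel : Pr p ({ω | L ω = false} ∩ {ω | X ω = x ∧ A ω = a}) * Pr p {ω | L ω = false} =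
      Pr p ({ω | A ω = a} ∩ {ω | L ω = false}) * Pr p ({ω | L ω = false} ∩ {ω | X ω = x}) :=
    (div_eq_div_iff (ne_of_gt hfx) (ne_of_gt hf)).mp hind
  have hlog : Real.logb 2 (Pr p ({ω | L ω = false} ∩ {ω | X ω = x ∧ A ω = a})) +
      Real.logb 2 (Pr p {ω | L ω = false}) =
      Real.logb 2 (Pr p ({ω | A ω = a} ∩ {ω | L ω = false})) +
      Real.logb 2 (Pr p ({ω | L ω = false} ∩ {ω | X ω = x})) := by
    rw [← Real.logb_mul (ne_of_gt hfxa) (ne_of_gt hf),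
        ← Real.logb_mul (ne_of_gt haf) (ne_of_gt hfx), hrel]
  unfold cPr
  rw [Real.logb_div (ne_of_gt hfxa) (ne_of_gt hxa),
      Real.logb_div (ne_of_gt hfx) (ne_of_gt hx),
      Real.logb_div (ne_of_gt hx) (ne_of_gt hxa),
      Real.logb_div (ne_of_gt haf) (ne_of_gt hf)]
  ring_nf
  nlinarith [hlog, hxa]
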